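/- Let μ be a real number with 1 < μ ≤ 2 and set γ = (1+μ²)/μ. Define a = μ/(1+μ²), b = μ²/(1+μ²), and c = (1+μ²−μ)/(1+μ²). Then c = 1 − 1/γ is the nontrivial fixed point of f_γ, and the following hold: f_γ(a) = c, f_γ(b) = a, f_γ(c) = c, T_μ(a) = b, T_μ(b) = a, and T_μ(c) = b. Consequently the three-point set Λ = {a, b, c} is an invariant set of the IFS {f_γ, T_μ}: f_γ(Λ) ∪ T_μ(Λ) = Λ. This is the 3-point toss-and-catch of the logistic-tent IFS arising under condition (C′3): γ = (1+μ²)/μ. -/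

import Mathlib

/-- The logistic map `f_γ(x) = γ·x·(1−x)`. -/
def logistic (γ x : ℝ) : ℝ := γ * x * (1 - x)

/-- The tent map `T_μ(x) = μ·x` for `x < 1/2` and `T_μ(x) = μ·(1−x)` for `x ≥ 1/2`. -/
noncomputable def tent (μ x : ℝ) : ℝ := if x < 1 / 2 then μ * x else μ * (1 - x)

/-- The 3-point toss-and-catch of the logistic-tent IFS under condition (C′3):
for `1 < μ ≤ 2` and `γ = (1+μ²)/μ`, with `a = μ/(1+μ²)`, `b = μ²/(1+μ²)`,
`c = (1+μ²−μ)/(1+μ²)`, we have `c = 1 − 1/γ`, the transitions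
`f_γ(a) = c`, `f_γ(b) = a`, `f_γ(c) = c`, `T_μ(a) = b`, `T_μ(b) = a`, `T_μ(c) = b`,
and `Λ = {a, b, c}` is an invariant set of the IFS `{f_γ, T_μ}`. -/
theorem logistic_tent_IFS_three_point_toss_and_catch (μ γ : ℝ)
    (hμ1 : 1 < μ) (hμ2 : μ ≤ 2) (hγ : γ = (1 + μ ^ 2) / μ)
    (a b c : ℝ)
    (ha : a = μ / (1 + μ ^ 2)) (hb : b = μ ^ 2 / (1 + μ ^ 2))
    (hc : c = (1 + μ ^ 2 - μ) / (1 + μ ^ 2)) :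
    c = 1 - 1 / γ ∧
    logistic γ a = c ∧ logistic γ b = a ∧ logistic γ c = c ∧
    tent μ a = b ∧ tent μ b = a ∧ tent μ c = b ∧
    (logistic γ '' ({a, b, c} : Set ℝ) ∪ tent μ '' ({a, b, c} : Set ℝ)
      = ({a, b, c} : Set ℝ)) := by
  have hμ0 : (0:ℝ) < μ := by linarith
  have hd : (0:ℝ) < 1 + μ ^ 2 := by positivity
  have hd' : (1 + μ ^ 2) ≠ 0 := ne_of_gt hd
  have hμ' : μ ≠ 0 := ne_of_gt hμ0
  have hsq : 0 < (μ - 1) ^ 2 := by nlinarith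
  have hA : a < 1 / 2 := by
    rw [ha, div_lt_iff₀ hd]; nlinarith
  have hB : ¬ b < 1 / 2 := by
    rw [hb, not_lt, le_div_iff₀ hd]; nlinarith
  have hC : ¬ c < 1 / 2 := by
    rw [hc, not_lt, le_div_iff₀ hd]; nlinarith
  have hcγ : c = 1 - 1 / γ := by
    rw [hc, hγ]; field_simp
  have hla : logistic γ a = c := by
    rw [logistic, ha, hc, hγ]; field_simp
  have hlb : logistic γ b = a := by
    rw [logistic, ha, hb, hγ]; field_simp; ring
  have hlc : logistic γ c = c := by
    rw [logistic, hc, hγ]; field_simp; ring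
  have hta : tent μ a = b := by
    rw [tent, if_pos hA, ha, hb]; field_simp
  have htb : tent μ b = a := by
    rw [tent, if_neg hB, ha, hb]; field_simp; ring
  have htc : tent μ c = b := by
    rw [tent, if_neg hC, hb, hc]; field_simp; ring
  refine ⟨hcγ, hla, hlb, hlc, hta, htb, htc, ?_⟩
  ext x
  simp only [Set.image_insert_eq, Set.image_singleton, Set.mem_union,
    Set.mem_insert_iff, Set.mem_singleton_iff, hla, hlb, hlc, hta, htb, htc]
  tauto
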